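/- (Descent inequality from smoothness) Let C be a real n×n matrix, X ∈ O(n), and Ω a skew-symmetric real n×n matrix with ‖Ω‖₂ < π. Then Tr(C X) − Tr(C · X·exp(Ω)) ≤ −Tr(Ωᵀ · skew(Xᵀ Cᵀ)) + (σmax(C)/2)·‖Ω‖_F². -/

import Mathlib

open Matrix

noncomputable section

/-- Matrix exponential of a real square matrix. -/
def mexp {n : ℕ} (A : Matrix (Fin n) (Fin n) ℝ) : Matrix (Fin n) (Fin n) ℝ :=
  NormedSpace.exp A

/-- Skew-symmetric part: `skew M = (M - Mᵀ)/2`. -/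
def skewPart {n : ℕ} (M : Matrix (Fin n) (Fin n) ℝ) : Matrix (Fin n) (Fin n) ℝ :=
  (1 / 2 : ℝ) • (M - Mᵀ)

/-- Frobenius norm of a real square matrix. -/
def frobNorm {n : ℕ} (A : Matrix (Fin n) (Fin n) ℝ) : ℝ :=
  Real.sqrt (∑ i, ∑ j, (A i j) ^ 2)

/-- The singular values of `A`: square roots of the eigenvalues of `AᴴA = AᵀA`. -/
def singVals {n : ℕ} (A : Matrix (Fin n) (Fin n) ℝ) : Fin n → ℝ :=
  fun i => Real.sqrt ((by simpa using Matrix.isHermitian_conjTranspose_mul_self A : (Aᵀ * A).IsHermitian).eigenvalues i)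

/-- Largest singular value of `A`. -/
def sigmaMax {n : ℕ} (A : Matrix (Fin n) (Fin n) ℝ) : ℝ := ⨆ i, singVals A i

/-- Smallest singular value of `A`. -/
def sigmaMin {n : ℕ} (A : Matrix (Fin n) (Fin n) ℝ) : ℝ := ⨅ i, singVals A i

/-- Spectral norm (largest singular value) of `A`. -/
def specNorm {n : ℕ} (A : Matrix (Fin n) (Fin n) ℝ) : ℝ := sigmaMax A

/-- Riemannian distance on a connected component of `O(n)`:
`dist(X,Y) = min { ‖Ω‖_F : Ω skew-symmetric, X·exp(Ω) = Y }`. -/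
def Odist {n : ℕ} (X Y : Matrix (Fin n) (Fin n) ℝ) : ℝ :=
  sInf {d : ℝ | ∃ Ω : Matrix (Fin n) (Fin n) ℝ, Ωᵀ = -Ω ∧ X * mexp Ω = Y ∧ d = frobNorm Ω}

end

section Aux
open Matrix

variable {n : ℕ}

lemma frobNorm_sq (Ω : Matrix (Fin n) (Fin n) ℝ) :
    frobNorm Ω ^ 2 = ∑ i, ∑ j, Ω i j ^ 2 := by
  rw [frobNorm, Real.sq_sqrt]
  positivity

lemma sigmaMax_nonneg (A : Matrix (Fin n) (Fin n) ℝ) : 0 ≤ sigmaMax A := by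
  rcases isEmpty_or_nonempty (Fin n) with h | h
  · simp [sigmaMax, Real.iSup_of_isEmpty]
  · obtain ⟨i⟩ := h
    have h1 : singVals A i ≤ sigmaMax A :=
      le_ciSup (Set.Finite.bddAbove (Set.finite_range (singVals A))) i
    have h0 : 0 ≤ singVals A i := Real.sqrt_nonneg _
    linarith

lemma smul_one_sub_posSemidef {A : Matrix (Fin n) (Fin n) ℝ} (hA : A.IsHermitian) (c : ℝ)
    (h : ∀ i, hA.eigenvalues i ≤ c) :
    ((c • (1 : Matrix (Fin n) (Fin n) ℝ)) - A).PosSemidef := by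
  have hU : (hA.eigenvectorUnitary : Matrix (Fin n) (Fin n) ℝ)
      * star (hA.eigenvectorUnitary : Matrix (Fin n) (Fin n) ℝ) = 1 :=
    Matrix.mem_unitaryGroup_iff.mp hA.eigenvectorUnitary.2
  have hd : Matrix.diagonal (fun i => c - hA.eigenvalues i)
      = c • (1 : Matrix (Fin n) (Fin n) ℝ) - Matrix.diagonal (RCLike.ofReal ∘ hA.eigenvalues) := by
    ext i j
    rcases eq_or_ne i j with rfl | hij
    · simp [RCLike.ofReal_real_eq_id]
    · simp [Matrix.diagonal_apply_ne _ hij, Matrix.one_apply_ne hij]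
  have key : c • (1 : Matrix (Fin n) (Fin n) ℝ) - A
      = (hA.eigenvectorUnitary : Matrix (Fin n) (Fin n) ℝ)
        * Matrix.diagonal (fun i => c - hA.eigenvalues i)
        * star (hA.eigenvectorUnitary : Matrix (Fin n) (Fin n) ℝ) := by
    rw [hd, Matrix.mul_sub, Matrix.sub_mul, Matrix.mul_smul, Matrix.mul_one,
      Matrix.smul_mul, hU, ← Unitary.conjStarAlgAut_apply (S := ℝ), ← hA.spectral_theorem]
  rw [key, Matrix.star_eq_conjTranspose]
  exact (Matrix.posSemidef_diagonal_iff.mpr fun i => by linarith [h i]).mul_mul_conjTranspose_same _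

lemma mulVec_sq_le (C : Matrix (Fin n) (Fin n) ℝ) (v : Fin n → ℝ) :
    (C *ᵥ v) ⬝ᵥ (C *ᵥ v) ≤ sigmaMax C ^ 2 * (v ⬝ᵥ v) := by
  have hH : (Cᵀ * C).IsHermitian := by simpa using Matrix.isHermitian_conjTranspose_mul_self C
  have heig : ∀ i, hH.eigenvalues i ≤ sigmaMax C ^ 2 := by
    intro i
    have h1 : singVals C i ≤ sigmaMax C :=
      le_ciSup (Set.Finite.bddAbove (Set.finite_range (singVals C))) i
    have h0 : 0 ≤ hH.eigenvalues i :=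
      Matrix.eigenvalues_conjTranspose_mul_self_nonneg C i
    calc hH.eigenvalues i = singVals C i ^ 2 := by rw [singVals, Real.sq_sqrt h0]
      _ ≤ sigmaMax C ^ 2 := pow_le_pow_left₀ (Real.sqrt_nonneg _) h1 2
  have hpsd := smul_one_sub_posSemidef hH (sigmaMax C ^ 2) heig
  have h0 := hpsd.dotProduct_mulVec_nonneg v
  simp only [Matrix.sub_mulVec, Matrix.smul_mulVec, Matrix.one_mulVec,
    dotProduct_sub, dotProduct_smul, star_trivial, smul_eq_mul] at h0
  have hdot : v ⬝ᵥ ((Cᴴ * C) *ᵥ v) = (C *ᵥ v) ⬝ᵥ (C *ᵥ v) := by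
    rw [Matrix.conjTranspose_eq_transpose_of_trivial, ← Matrix.mulVec_mulVec,
      Matrix.dotProduct_mulVec, Matrix.vecMul_transpose]
  rw [Matrix.conjTranspose_eq_transpose_of_trivial] at hdot
  linarith [h0, hdot.symm.le]


lemma orth_mulVec_dot (Q : Matrix (Fin n) (Fin n) ℝ) (hQ : Qᵀ * Q = 1) (w : Fin n → ℝ) :
    (Q *ᵥ w) ⬝ᵥ (Q *ᵥ w) = w ⬝ᵥ w := by
  rw [Matrix.dotProduct_mulVec, ← Matrix.mulVec_transpose, Matrix.mulVec_mulVec, hQ,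
    Matrix.one_mulVec]

lemma dot_mulVec_le (A : Matrix (Fin n) (Fin n) ℝ) (σ : ℝ) (hσ : 0 ≤ σ)
    (hA : ∀ v, (A *ᵥ v) ⬝ᵥ (A *ᵥ v) ≤ σ ^ 2 * (v ⬝ᵥ v)) (r : Fin n → ℝ) :
    r ⬝ᵥ (A *ᵥ r) ≤ σ * (r ⬝ᵥ r) := by
  have hrr : 0 ≤ r ⬝ᵥ r := Finset.sum_nonneg fun i _ => mul_self_nonneg _
  have h1 : (r ⬝ᵥ (A *ᵥ r)) ^ 2 ≤ (σ * (r ⬝ᵥ r)) ^ 2 := by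
    have hcs := Finset.sum_mul_sq_le_sq_mul_sq Finset.univ r (A *ᵥ r)
    have e1 : ∑ i, r i * (A *ᵥ r) i = r ⬝ᵥ (A *ᵥ r) := rfl
    have e2 : ∑ i, r i ^ 2 = r ⬝ᵥ r := by simp [dotProduct, pow_two]
    have e3 : ∑ i, (A *ᵥ r) i ^ 2 = (A *ᵥ r) ⬝ᵥ (A *ᵥ r) := by simp [dotProduct, pow_two]
    rw [e1, e2, e3] at hcs
    nlinarith [hA r, hrr, mul_le_mul_of_nonneg_left (hA r) hrr]
  calc r ⬝ᵥ (A *ᵥ r) ≤ |r ⬝ᵥ (A *ᵥ r)| := le_abs_self _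
    _ = Real.sqrt ((r ⬝ᵥ (A *ᵥ r)) ^ 2) := (Real.sqrt_sq_eq_abs _).symm
    _ ≤ Real.sqrt ((σ * (r ⬝ᵥ r)) ^ 2) := Real.sqrt_le_sqrt h1
    _ = |σ * (r ⬝ᵥ r)| := Real.sqrt_sq_eq_abs _
    _ = σ * (r ⬝ᵥ r) := abs_of_nonneg (mul_nonneg hσ hrr)

lemma conj_trace_le (A Ω : Matrix (Fin n) (Fin n) ℝ) (σ : ℝ) (hσ : 0 ≤ σ)
    (hA : ∀ v, (A *ᵥ v) ⬝ᵥ (A *ᵥ v) ≤ σ ^ 2 * (v ⬝ᵥ v)) :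
    (Ω * A * Ωᵀ).trace ≤ σ * ∑ i, ∑ j, Ω i j ^ 2 := by
  have hdiag : ∀ j, (Ω * A * Ωᵀ) j j = (Ω j) ⬝ᵥ (A *ᵥ (Ω j)) := by
    intro j
    simp only [Matrix.mul_apply, Matrix.transpose_apply, dotProduct, Matrix.mulVec,
      Finset.sum_mul, Finset.mul_sum]
    rw [Finset.sum_comm]
    exact Finset.sum_congr rfl fun a _ => Finset.sum_congr rfl fun b _ => by ring
  have : (Ω * A * Ωᵀ).trace = ∑ j, (Ω j) ⬝ᵥ (A *ᵥ (Ω j)) := by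
    rw [Matrix.trace]
    exact Finset.sum_congr rfl fun j _ => hdiag j
  rw [this, Finset.mul_sum]
  refine Finset.sum_le_sum fun j _ => ?_
  have := dot_mulVec_le A σ hσ hA (Ω j)
  have e : Ω j ⬝ᵥ Ω j = ∑ b, Ω j b ^ 2 := by simp [dotProduct, pow_two]
  rw [e] at this
  exact this

lemma mexp_skew_orth (Ω : Matrix (Fin n) (Fin n) ℝ) (h : Ωᵀ = -Ω) :
    (mexp Ω)ᵀ * mexp Ω = 1 := by
  have h1 : (mexp Ω)ᵀ = mexp (-Ω) := by
    rw [mexp, mexp, ← Matrix.exp_transpose, h]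
  rw [h1, mexp, mexp, ← Matrix.exp_add_of_commute _ _ ((Commute.refl Ω).neg_left),
    neg_add_cancel]
  exact NormedSpace.exp_zero

lemma hasDerivAt_trace_mexp (Ω N : Matrix (Fin n) (Fin n) ℝ) (t : ℝ) :
    HasDerivAt (fun u : ℝ => (N * mexp (u • Ω)).trace)
      (((Ω * N) * mexp (t • Ω)).trace) t := by
  letI : SeminormedRing (Matrix (Fin n) (Fin n) ℝ) := Matrix.linftyOpSemiNormedRing
  letI : NormedRing (Matrix (Fin n) (Fin n) ℝ) := Matrix.linftyOpNormedRing
  letI : NormedAlgebra ℝ (Matrix (Fin n) (Fin n) ℝ) := Matrix.linftyOpNormedAlgebra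
  have h := hasDerivAt_exp_smul_const (𝕂 := ℝ) Ω t
  let L : Matrix (Fin n) (Fin n) ℝ →ₗ[ℝ] ℝ :=
    (Matrix.traceLinearMap (Fin n) ℝ ℝ).comp (LinearMap.mulLeft ℝ N)
  have hL := (LinearMap.toContinuousLinearMap L).hasFDerivAt
    (x := NormedSpace.exp (t • Ω))
  have h2 := hL.comp_hasDerivAt t h
  have hval : (LinearMap.toContinuousLinearMap L) (NormedSpace.exp (t • Ω) * Ω)
      = ((Ω * N) * mexp (t • Ω)).trace := by
    show (N * (NormedSpace.exp (t • Ω) * Ω)).trace = _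
    rw [← Matrix.mul_assoc, Matrix.trace_mul_comm, ← Matrix.mul_assoc, mexp]
  replace h2 := h2.congr_deriv hval
  exact h2

lemma continuous_trace_mexp (Ω N : Matrix (Fin n) (Fin n) ℝ) :
    Continuous fun u : ℝ => (N * mexp (u • Ω)).trace :=
  continuous_iff_continuousAt.mpr fun t => (hasDerivAt_trace_mexp Ω N t).continuousAt

end Aux

/-- geodesic smoothness (descent) inequality for the Procrustes
objective `f(X) = -Tr(CX)` with `L = σmax(C)`. -/
theorem procrustes_descent_inequality {n : ℕ}
    (C X Ω : Matrix (Fin n) (Fin n) ℝ)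
    (hX : Xᵀ * X = 1)
    (hskew : Ωᵀ = -Ω) (hΩ : specNorm Ω < Real.pi) :
    (C * X).trace - (C * (X * mexp Ω)).trace ≤
      -(Ωᵀ * skewPart (Xᵀ * Cᵀ)).trace + (sigmaMax C / 2) * frobNorm Ω ^ 2 := by
  have hσ : 0 ≤ sigmaMax C := sigmaMax_nonneg C
  -- gradient-term reduction
  have t1 : (Ω * (Xᵀ * Cᵀ)).trace = -((C * X * Ω).trace) := by
    conv_lhs => rw [← Matrix.trace_transpose]
    rw [Matrix.transpose_mul, Matrix.transpose_mul, Matrix.transpose_transpose,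
      Matrix.transpose_transpose, hskew, Matrix.mul_neg, Matrix.trace_neg]
  have t2 : (Ω * (C * X)).trace = (C * X * Ω).trace := by
    rw [Matrix.trace_mul_comm, Matrix.mul_assoc]
  have hgrad : (Ωᵀ * skewPart (Xᵀ * Cᵀ)).trace = (C * X * Ω).trace := by
    have hsp : skewPart (Xᵀ * Cᵀ) = (1 / 2 : ℝ) • (Xᵀ * Cᵀ - C * X) := by
      rw [skewPart, Matrix.transpose_mul, Matrix.transpose_transpose,
        Matrix.transpose_transpose]
    rw [hsp, hskew, Matrix.mul_smul, Matrix.trace_smul, Matrix.mul_sub, Matrix.trace_sub,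
      Matrix.neg_mul, Matrix.neg_mul, Matrix.trace_neg, Matrix.trace_neg, t1, t2]
    rw [smul_eq_mul]; ring
  -- orthogonality of X * mexp (t • Ω)
  have hXE : ∀ t : ℝ, ((X * mexp (t • Ω))ᵀ * (X * mexp (t • Ω))) = 1 := by
    intro t
    have hsk : (t • Ω)ᵀ = -(t • Ω) := by rw [Matrix.transpose_smul, hskew, smul_neg]
    have hE := mexp_skew_orth (t • Ω) hsk
    rw [Matrix.transpose_mul, Matrix.mul_assoc, ← Matrix.mul_assoc Xᵀ, hX,
      Matrix.one_mul, hE]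
  -- spectral bound for C * X * mexp (t • Ω)
  have hAprop : ∀ t : ℝ, ∀ v : Fin n → ℝ,
      ((C * X * mexp (t • Ω)) *ᵥ v) ⬝ᵥ ((C * X * mexp (t • Ω)) *ᵥ v)
        ≤ sigmaMax C ^ 2 * (v ⬝ᵥ v) := by
    intro t v
    have h1 : (C * X * mexp (t • Ω)) *ᵥ v = C *ᵥ ((X * mexp (t • Ω)) *ᵥ v) := by
      rw [Matrix.mul_assoc, ← Matrix.mulVec_mulVec]
    rw [h1]
    calc (C *ᵥ ((X * mexp (t • Ω)) *ᵥ v)) ⬝ᵥ (C *ᵥ ((X * mexp (t • Ω)) *ᵥ v))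
        ≤ sigmaMax C ^ 2 * (((X * mexp (t • Ω)) *ᵥ v) ⬝ᵥ ((X * mexp (t • Ω)) *ᵥ v)) :=
          mulVec_sq_le C _
      _ = sigmaMax C ^ 2 * (v ⬝ᵥ v) := by rw [orth_mulVec_dot _ (hXE t)]
  -- pointwise bound on the second derivative term
  have hptbound : ∀ t : ℝ,
      -(((Ω * (Ω * (C * X))) * mexp (t • Ω)).trace)
        ≤ sigmaMax C * ∑ i, ∑ j, Ω i j ^ 2 := by
    intro t
    have e1 : (Ω * ((C * X) * mexp (t • Ω)) * Ωᵀ).trace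
        = -(((Ω * (Ω * (C * X))) * mexp (t • Ω)).trace) := by
      rw [hskew, Matrix.mul_neg, Matrix.trace_neg, Matrix.trace_mul_comm, neg_inj]
      simp only [Matrix.mul_assoc]
    rw [← e1]
    exact conj_trace_le ((C * X) * mexp (t • Ω)) Ω (sigmaMax C) hσ (hAprop t)
  -- the interpolation function and its derivative
  set K := ((C * X) * mexp Ω).trace with hK
  set φ : ℝ → ℝ := fun t => K - ((C * X) * mexp (t • Ω)).trace
      - (1 - t) * ((Ω * (C * X)) * mexp (t • Ω)).trace with hφdef
  have hφ : ∀ t : ℝ, HasDerivAt φ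
      (-((1 - t) * ((Ω * (Ω * (C * X))) * mexp (t • Ω)).trace)) t := by
    intro t
    have h1 := hasDerivAt_trace_mexp Ω (C * X) t
    have h2 := hasDerivAt_trace_mexp Ω (Ω * (C * X)) t
    have h3 : HasDerivAt (fun u : ℝ => 1 - u) (-1) t := by
      simpa using (hasDerivAt_id t).const_sub (1 : ℝ)
    have h4 := h3.mul h2
    have h5 := ((hasDerivAt_const t K).sub h1).sub h4
    refine h5.congr_deriv ?_
    ring
  have hgcont : Continuous
      (fun t : ℝ => -((1 - t) * ((Ω * (Ω * (C * X))) * mexp (t • Ω)).trace)) :=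
    ((continuous_const.sub continuous_id).mul (continuous_trace_mexp Ω _)).neg
  have hFTC := intervalIntegral.integral_eq_sub_of_hasDerivAt
    (f := φ) (f' := fun t => -((1 - t) * ((Ω * (Ω * (C * X))) * mexp (t • Ω)).trace))
    (a := 0) (b := 1) (fun t _ => hφ t) (hgcont.intervalIntegrable 0 1)
  have hexp0 : mexp (0 : Matrix (Fin n) (Fin n) ℝ) = 1 := by
    rw [mexp]; exact NormedSpace.exp_zero
  have hφ1 : φ 1 = 0 := by
    have h1 : (1 : ℝ) • Ω = Ω := one_smul ℝ Ω
    simp [hφdef, h1, hK]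
  have hφ0 : φ 0 = K - (C * X).trace - (C * X * Ω).trace := by
    have h0 : (0 : ℝ) • Ω = (0 : Matrix (Fin n) (Fin n) ℝ) := zero_smul ℝ Ω
    rw [hφdef]
    show K - ((C * X) * mexp ((0:ℝ) • Ω)).trace
        - (1 - 0) * ((Ω * (C * X)) * mexp ((0:ℝ) • Ω)).trace = _
    rw [h0, hexp0, Matrix.mul_one, Matrix.mul_one, t2]
    ring
  have hmono : (∫ t in (0:ℝ)..1, -((1 - t) * ((Ω * (Ω * (C * X))) * mexp (t • Ω)).trace))
      ≤ ∫ t in (0:ℝ)..1, (1 - t) * (sigmaMax C * ∑ i, ∑ j, Ω i j ^ 2) := by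
    apply intervalIntegral.integral_mono_on zero_le_one (hgcont.intervalIntegrable 0 1)
      (((continuous_const.sub continuous_id).mul continuous_const).intervalIntegrable 0 1)
    intro t ht
    have h1t : (0:ℝ) ≤ 1 - t := by linarith [ht.2]
    calc -((1 - t) * ((Ω * (Ω * (C * X))) * mexp (t • Ω)).trace)
        = (1 - t) * (-(((Ω * (Ω * (C * X))) * mexp (t • Ω)).trace)) := by ring
      _ ≤ (1 - t) * (sigmaMax C * ∑ i, ∑ j, Ω i j ^ 2) :=
          mul_le_mul_of_nonneg_left (hptbound t) h1t
  have hval : (∫ t in (0:ℝ)..1, (1 - t) * (sigmaMax C * ∑ i, ∑ j, Ω i j ^ 2))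
      = (sigmaMax C * ∑ i, ∑ j, Ω i j ^ 2) / 2 := by
    have hre : (fun t : ℝ => (1 - t) * (sigmaMax C * ∑ i, ∑ j, Ω i j ^ 2))
        = fun t : ℝ => (sigmaMax C * ∑ i, ∑ j, Ω i j ^ 2)
          - (sigmaMax C * ∑ i, ∑ j, Ω i j ^ 2) * t := by
      funext t; ring
    have h1 : IntervalIntegrable (fun _ : ℝ => sigmaMax C * ∑ i, ∑ j, Ω i j ^ 2)
        MeasureTheory.volume 0 1 := intervalIntegrable_const
    have h2 : IntervalIntegrable
        (fun t : ℝ => (sigmaMax C * ∑ i, ∑ j, Ω i j ^ 2) * t)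
        MeasureTheory.volume 0 1 := (Continuous.intervalIntegrable (by fun_prop) 0 1)
    rw [hre, intervalIntegral.integral_sub h1 h2, intervalIntegral.integral_const,
      intervalIntegral.integral_const_mul, integral_id]
    norm_num
    ring
  rw [hφ1, hφ0] at hFTC
  have hkey : (C * X).trace + (C * X * Ω).trace - K
      ≤ (sigmaMax C * ∑ i, ∑ j, Ω i j ^ 2) / 2 := by
    rw [hval] at hmono
    linarith [hFTC, hmono]
  have hassoc : (C * (X * mexp Ω)).trace = K := by
    rw [hK, Matrix.mul_assoc]
  rw [hassoc, hgrad, frobNorm_sq]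
  linarith [hkey]
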